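/- Let K_m be the complete graph on m vertices with m even. Then the blow-up ⊗^2 K_m admits perfect state transfer between (0,u) and (1,u) at time π/2 for every vertex u: the ((0,u),(1,u))-entry of exp(−i(π/2)(J_2 ⊗ A(K_m))) has modulus 1 (in fact equals −1). -/

import Mathlib

open NormedSpace

section idem
variable {n : Type*} [Fintype n] [DecidableEq n]

/-- exp of a scalar multiple of an idempotent matrix. -/
lemma exp_smul_idem (e : Matrix n n ℂ) (he : e * e = e) (s : ℂ) :
    exp (s • e) = 1 + (Complex.exp s - 1) • e := by
  letI : SeminormedRing (Matrix n n ℂ) := Matrix.linftyOpSemiNormedRing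
  letI : NormedRing (Matrix n n ℂ) := Matrix.linftyOpNormedRing
  letI : NormedAlgebra ℂ (Matrix n n ℂ) := Matrix.linftyOpNormedAlgebra
  have h1 : (1 - e) * (1 - e) = 1 - e := by
    rw [mul_sub, sub_mul, sub_mul, he, one_mul, one_mul, mul_one]; abel
  have h2 : (1 - e) * e = 0 := by rw [sub_mul, he, one_mul, sub_self]
  have h3 : e * (1 - e) = 0 := by rw [mul_sub, he, mul_one, sub_self]
  let f : ℂ × ℂ →+* Matrix n n ℂ :=
  { toFun := fun p => p.1 • (1 - e) + p.2 • e
    map_one' := by simp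
    map_mul' := by
      rintro ⟨a, b⟩ ⟨c, d⟩
      simp only [Prod.mk_mul_mk, add_mul, mul_add, smul_mul_smul_comm, h1, h2, h3,
        smul_zero, add_zero, zero_add, he]
    map_zero' := by simp
    map_add' := by rintro ⟨a, b⟩ ⟨c, d⟩; simp [add_smul]; abel }
  have hf : Continuous f := by
    show Continuous fun p : ℂ × ℂ => p.1 • (1 - e) + p.2 • e
    fun_prop
  have hse : s • e = f (0, s) := by simp [f]
  rw [hse]; refine (map_exp f hf _).symm.trans ?_
  have : exp ((0 : ℂ), s) = (exp (0 : ℂ), exp s) := by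
    ext
    · exact Prod.fst_exp _
    · exact Prod.snd_exp _
  rw [this]
  show (exp (0:ℂ)) • (1 - e) + (exp s) • e = _
  rw [exp_zero, ← Complex.exp_eq_exp_ℂ]
  rw [one_smul, sub_smul, one_smul]
  abel

end idem

/-- The blow-up of `n` copies of `G`. -/
def SimpleGraph.blowup {V : Type*} (n : ℕ) (G : SimpleGraph V) : SimpleGraph (ZMod n × V) :=
  G.comap Prod.snd

instance {V : Type*} {n : ℕ} (G : SimpleGraph V) [h : DecidableRel G.Adj] :
    DecidableRel (G.blowup n).Adj := fun x y => h x.2 y.2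

/-- For `m` even, the blow-up `⊗² K_m` admits perfect state transfer between `(0,u)` and
`(1,u)` at time `π/2`: the corresponding entry of the transition matrix equals `−1` (and hence
has modulus `1`). -/
theorem blowup_complete_pst (m : ℕ) (hm : Even m) (u : Fin m) :
    ‖NormedSpace.exp
        ((-(Complex.I * (Real.pi / 2))) •
          ((⊤ : SimpleGraph (Fin m)).blowup 2).adjMatrix ℂ) (0, u) (1, u)‖ = 1 ∧
    NormedSpace.exp
        ((-(Complex.I * (Real.pi / 2))) •
          ((⊤ : SimpleGraph (Fin m)).blowup 2).adjMatrix ℂ) (0, u) (1, u) = -1 := by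
  obtain ⟨k, hk⟩ := hm
  rcases Nat.eq_zero_or_pos m with h0 | hpos
  · subst h0; exact u.elim0
  set V := ZMod 2 × Fin m
  set J : Matrix V V ℂ := Matrix.of fun _ _ => 1 with hJ
  set P : Matrix V V ℂ := Matrix.of fun x y => if x.2 = y.2 then 1 else 0 with hP
  have cardV : (Fintype.card V : ℂ) = 2 * m := by
    simp only [V, Fintype.card_prod, ZMod.card, Fintype.card_fin]
    push_cast; ring
  -- adjacency matrix
  have hA : ((⊤ : SimpleGraph (Fin m)).blowup 2).adjMatrix ℂ = J - P := by
    ext x y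
    simp only [SimpleGraph.adjMatrix_apply, SimpleGraph.blowup, SimpleGraph.comap,
      SimpleGraph.top_adj, Matrix.sub_apply, hJ, hP, Matrix.of_apply]
    by_cases h : x.2 = y.2 <;> simp [h]
  -- multiplication facts
  have hJJ : J * J = (2 * (m : ℂ)) • J := by
    ext x y
    simp only [hJ, Matrix.mul_apply, Matrix.of_apply, mul_one, Finset.sum_const,
      Finset.card_univ, nsmul_eq_mul, Matrix.smul_apply, smul_eq_mul]
    rw [cardV]
  have hPP : P * P = (2 : ℂ) • P := by
    ext x y
    simp only [hP, Matrix.mul_apply, Matrix.of_apply, Matrix.smul_apply, smul_eq_mul]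
    rw [Fintype.sum_prod_type]
    simp only [ite_mul, one_mul, zero_mul, Finset.sum_ite_eq, Finset.mem_univ, if_true,
      Finset.sum_const, Finset.card_univ, ZMod.card, nsmul_eq_mul, Nat.cast_ofNat]
    rw [show (∑ _x : ZMod 2, if x.2 = y.2 then (1:ℂ) else 0) =
        (Fintype.card (ZMod 2)) • (if x.2 = y.2 then (1:ℂ) else 0) from
      Finset.sum_const _, ZMod.card, nsmul_eq_mul]
    push_cast; ring
  have hJP : J * P = (2:ℂ) • J := by
    ext x y
    simp only [hJ, hP, Matrix.mul_apply, Matrix.of_apply, one_mul, Matrix.smul_apply,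
      smul_eq_mul, mul_one]
    rw [Fintype.sum_prod_type]
    simp only [Finset.sum_ite_eq', Finset.mem_univ, if_true]
    rw [show (∑ _x : ZMod 2, (1:ℂ)) = (Fintype.card (ZMod 2)) • (1:ℂ) from
      Finset.sum_const _, ZMod.card, nsmul_eq_mul]
    norm_num
  have hPJ : P * J = (2:ℂ) • J := by
    ext x y
    simp only [hJ, hP, Matrix.mul_apply, Matrix.of_apply, mul_one, Matrix.smul_apply,
      smul_eq_mul]
    rw [Fintype.sum_prod_type]
    simp only [Finset.sum_ite_eq, Finset.mem_univ, if_true]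
    rw [show (∑ _x : ZMod 2, (1:ℂ)) = (Fintype.card (ZMod 2)) • (1:ℂ) from
      Finset.sum_const _, ZMod.card, nsmul_eq_mul]
    norm_num
  have hmC : (m : ℂ) ≠ 0 := Nat.cast_ne_zero.mpr hpos.ne'
  set c : ℂ := -(Complex.I * (Real.pi / 2)) with hc
  have hcomm : Commute (c • J) ((Complex.I * (Real.pi / 2)) • P) := by
    have h : Commute J P := by
      unfold Commute SemiconjBy
      rw [hJP, hPJ]
    exact (h.smul_left _).smul_right _
  have hsplit : c • (J - P) = c • J + (Complex.I * (Real.pi / 2)) • P := by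
    rw [smul_sub, sub_eq_add_neg, ← neg_smul, hc, neg_neg]
  have e1 : exp (c • J) = 1 := by
    have hJ2 : c • J = (2 * (m:ℂ) * c) • ((2 * (m:ℂ))⁻¹ • J) := by
      rw [smul_smul]
      congr 1
      field_simp
    have hidem : ((2 * (m:ℂ))⁻¹ • J) * ((2 * (m:ℂ))⁻¹ • J) = (2 * (m:ℂ))⁻¹ • J := by
      rw [smul_mul_smul_comm, hJJ, smul_smul]
      congr 1
      field_simp
    rw [hJ2, exp_smul_idem _ hidem]
    have hval : Complex.exp (2 * (m:ℂ) * c) = 1 := by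
      have h2 : 2 * (m:ℂ) * c = -(k:ℂ) * (2 * Real.pi * Complex.I) := by
        rw [hc]
        push_cast [hk]
        ring
      have h3 := Complex.exp_int_mul_two_pi_mul_I (-(k:ℤ))
      push_cast at h3
      rw [h2]
      exact h3
    rw [hval]
    simp
  have e2 : exp ((Complex.I * (Real.pi / 2)) • P) = 1 - P := by
    have hP2 : (Complex.I * (Real.pi / 2)) • P
        = ((Real.pi : ℂ) * Complex.I) • ((2:ℂ)⁻¹ • P) := by
      rw [smul_smul]
      congr 1
      ring
    have hidem : ((2:ℂ)⁻¹ • P) * ((2:ℂ)⁻¹ • P) = (2:ℂ)⁻¹ • P := by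
      rw [smul_mul_smul_comm, hPP, smul_smul]
      congr 1
      norm_num
    rw [hP2, exp_smul_idem _ hidem, Complex.exp_pi_mul_I, smul_smul,
      show ((-1:ℂ) - 1) * 2⁻¹ = -1 by norm_num, neg_one_smul, ← sub_eq_add_neg]
  have key : exp (c • ((⊤ : SimpleGraph (Fin m)).blowup 2).adjMatrix ℂ) = 1 - P := by
    rw [hA, hsplit, Matrix.exp_add_of_commute _ _ hcomm, e1, e2, one_mul]
  have hne : ((0 : ZMod 2), u) ≠ ((1 : ZMod 2), u) := by
    intro h
    have h0 : (0 : ZMod 2) = 1 := congrArg Prod.fst h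
    exact absurd h0 (by decide)
  have entry : exp (c • ((⊤ : SimpleGraph (Fin m)).blowup 2).adjMatrix ℂ)
      ((0 : ZMod 2), u) ((1 : ZMod 2), u) = -1 := by
    rw [key]
    simp [Matrix.sub_apply, Matrix.one_apply_ne hne, hP]
  constructor
  · rw [show ((0, u) : ZMod 2 × Fin m) = (((0:ZMod 2), u)) from rfl] at *
    rw [entry]
    simp
  · exact entry
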